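/- In the FRT algebra O_q(SO(N)), for i < j with i ≠ j', the relations u^j_1 u^i_N = q u^i_N u^j_1 and u^i_1 u^j_N = q u^j_N u^i_1 + (q² − 1) u^i_N u^j_1 hold. -/

import Mathlib

/-- Heaviside step function: `θ(x) = 1` for `x > 0`, `0` otherwise. -/
noncomputable def heav (x : ℤ) : ℝ := if 0 < x then 1 else 0

/-- Kronecker delta. -/
noncomputable def kdelta (i j : ℕ) : ℝ := if i = j then 1 else 0

/-- `ρ_i = N/2 − i` for `i < i'`, `ρ_i = 0` for `i = i'`, and `ρ_{i'} = −ρ_i`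
(with `i' = N + 1 − i`). -/
noncomputable def rho (N i : ℕ) : ℝ :=
  if 2 * i < N + 1 then (N : ℝ) / 2 - i
  else if 2 * i = N + 1 then 0
  else (N : ℝ) / 2 + 1 - i

/-- The R-matrix of `O_q(SO(N))`:
`R^{ij}_{mn} = q^{δ_{ij} − δ_{ij'}} δ_{im} δ_{jn}
 + (q − q⁻¹) θ(i−m) (δ_{jm} δ_{in} − δ_{ji'} δ_{mn'} q^{−ρ_j − ρ_m})`. -/
noncomputable def Rmat (N : ℕ) (q : ℝ) (i j m n : ℕ) : ℝ :=
  q ^ ((if i = j then (1 : ℤ) else 0) - (if i = N + 1 - j then 1 else 0)) *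
      kdelta i m * kdelta j n +
    (q - q⁻¹) * heav ((i : ℤ) - m) *
      (kdelta j m * kdelta i n -
        kdelta j (N + 1 - i) * kdelta m (N + 1 - n) * q ^ (-(rho N j) - rho N m))

lemma Rmat_row (N : ℕ) (q : ℝ) (i j : ℕ) (hi : 1 ≤ i) (hij : i < j) (hj : j ≤ N)
    (hne : i ≠ N + 1 - j) :
    ∀ k l : ℕ, Rmat N q i j k l = if k = i ∧ l = j then 1 else 0 := by
  intro k l
  have h1 : ¬ i = j := by omega
  have h2 : ¬ j = N + 1 - i := by omega
  unfold Rmat kdelta heav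
  rw [if_neg h1, if_neg hne, if_neg h2]
  simp only [sub_zero, zpow_zero, one_mul, zero_mul, mul_zero]
  split_ifs <;> first | (exfalso; omega) | norm_num

lemma Rmat_row' (N : ℕ) (q : ℝ) (i j : ℕ) (hi : 1 ≤ i) (hij : i < j) (hj : j ≤ N)
    (hne : i ≠ N + 1 - j) :
    ∀ k l : ℕ, Rmat N q j i k l =
      (if k = j ∧ l = i then 1 else 0) + (if k = i ∧ l = j then q - q⁻¹ else 0) := by
  intro k l
  have h1 : ¬ j = i := by omega
  have h2 : ¬ j = N + 1 - i := by omega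
  have h3 : ¬ i = N + 1 - j := hne
  unfold Rmat kdelta heav
  rw [if_neg h1, if_neg h2, if_neg h3]
  simp only [sub_zero, zpow_zero, one_mul, zero_mul, mul_zero]
  split_ifs <;> first | (exfalso; omega) | norm_num

lemma Rmat_col (N : ℕ) (q : ℝ) (hN : 2 ≤ N) (l k : ℕ) (hl : l ≤ N) :
    Rmat N q l k N 1 = if k = 1 ∧ l = N then q⁻¹ else 0 := by
  unfold Rmat kdelta heav
  have hθ : ¬ (0 : ℤ) < (l : ℤ) - (N : ℤ) := by omega
  rw [if_neg hθ]
  simp only [mul_zero, zero_mul, add_zero]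
  split_ifs <;> first | (exfalso; omega) | simp

lemma sum_single_smul {A : Type*} [AddCommMonoid A] [Module ℝ A] (N i j : ℕ)
    (hi : i ∈ Finset.Icc 1 N) (hj : j ∈ Finset.Icc 1 N) (c : ℝ) (g : ℕ → ℕ → A) :
    ∑ k ∈ Finset.Icc 1 N, ∑ l ∈ Finset.Icc 1 N,
      (if k = i ∧ l = j then c else 0) • g k l = c • g i j := by
  rw [Finset.sum_eq_single_of_mem i hi (fun k _ hk =>
    Finset.sum_eq_zero (fun l _ => by simp [hk]))]
  rw [Finset.sum_eq_single_of_mem j hj (fun l _ hl => by simp [hl])]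
  simp

lemma col_sum {A : Type*} [AddCommMonoid A] [Module ℝ A] (N : ℕ) (q : ℝ) (hN : 2 ≤ N)
    (g : ℕ → ℕ → A) :
    ∑ k ∈ Finset.Icc 1 N, ∑ l ∈ Finset.Icc 1 N, Rmat N q l k N 1 • g k l =
      q⁻¹ • g 1 N := by
  have h : ∀ k ∈ Finset.Icc 1 N,
      (∑ l ∈ Finset.Icc 1 N, Rmat N q l k N 1 • g k l) =
      ∑ l ∈ Finset.Icc 1 N, (if k = 1 ∧ l = N then q⁻¹ else 0) • g k l := by
    intro k _
    refine Finset.sum_congr rfl (fun l hl => ?_)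
    rw [Rmat_col N q hN l k (Finset.mem_Icc.mp hl).2]
  rw [Finset.sum_congr rfl h,
    sum_single_smul N 1 N (Finset.mem_Icc.mpr ⟨le_rfl, by omega⟩)
      (Finset.mem_Icc.mpr ⟨by omega, le_rfl⟩) q⁻¹ g]

theorem stmt14 {A : Type*} [Ring A] [Algebra ℝ A] (N : ℕ) (q : ℝ) (hq : 1 < q)
    (u : ℕ → ℕ → A)
    (hRTT : ∀ i j m n : ℕ, 1 ≤ i → i ≤ N → 1 ≤ j → j ≤ N → 1 ≤ m → m ≤ N → 1 ≤ n → n ≤ N →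
      ∑ k ∈ Finset.Icc 1 N, ∑ l ∈ Finset.Icc 1 N, Rmat N q i j k l • (u k m * u l n) =
      ∑ k ∈ Finset.Icc 1 N, ∑ l ∈ Finset.Icc 1 N, Rmat N q l k m n • (u j k * u i l)) :
    ∀ i j : ℕ, 1 ≤ i → i < j → j ≤ N → i ≠ N + 1 - j →
      u j 1 * u i N = q • (u i N * u j 1) ∧
      u i 1 * u j N = q • (u j N * u i 1) + (q ^ 2 - 1) • (u i N * u j 1) := by
  intro i j hi hij hj hne
  have hq0 : (0 : ℝ) < q := lt_trans one_pos hq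
  have hqne : q ≠ 0 := ne_of_gt hq0
  have hN : 2 ≤ N := by omega
  have hi' : i ≤ N := by omega
  have hj1 : 1 ≤ j := by omega
  have miN : i ∈ Finset.Icc 1 N := Finset.mem_Icc.mpr ⟨hi, hi'⟩
  have mjN : j ∈ Finset.Icc 1 N := Finset.mem_Icc.mpr ⟨hj1, hj⟩
  -- RTT at (i, j, N, 1)
  have E1 := hRTT i j N 1 hi hi' hj1 hj (by omega) le_rfl le_rfl (by omega)
  simp only [Rmat_row N q i j hi hij hj hne] at E1
  rw [sum_single_smul N i j miN mjN 1 (fun k l => u k N * u l 1), one_smul,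
    col_sum N q hN (fun k l => u j k * u i l)] at E1
  -- E1 : u i N * u j 1 = q⁻¹ • (u j 1 * u i N)
  have eq1 : u j 1 * u i N = q • (u i N * u j 1) := by
    rw [E1, smul_smul, mul_inv_cancel₀ hqne, one_smul]
  refine ⟨eq1, ?_⟩
  -- RTT at (j, i, N, 1)
  have E2 := hRTT j i N 1 hj1 hj hi hi' (by omega) le_rfl le_rfl (by omega)
  simp only [Rmat_row' N q i j hi hij hj hne] at E2
  simp only [add_smul, Finset.sum_add_distrib] at E2
  rw [sum_single_smul N j i mjN miN 1 (fun k l => u k N * u l 1), one_smul,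
    sum_single_smul N i j miN mjN (q - q⁻¹) (fun k l => u k N * u l 1),
    col_sum N q hN (fun k l => u i k * u j l)] at E2
  -- E2 : u j N * u i 1 + (q - q⁻¹) • (u i N * u j 1) = q⁻¹ • (u i 1 * u j N)
  have : u i 1 * u j N = q • (u j N * u i 1 + (q - q⁻¹) • (u i N * u j 1)) := by
    rw [E2, smul_smul, mul_inv_cancel₀ hqne, one_smul]
  rw [this, smul_add, smul_smul]
  congr 1
  congr 1
  field_simp
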